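/- Let K be a field complete with respect to a nonarchimedean absolute value, and let L be a field extension of K complete with respect to a nonarchimedean absolute value extending that of K. Fix a nonempty set M and let (U, (u_m)_{m∈M}) be an M-Banachoid space over K; regard L as the M-normoid K-vector space all of whose seminorms equal the absolute value of L. Then the natural map x ↦ x ⊗ 1 from U to U ⊗̂_K L is an isometry: for every m ∈ M and every x ∈ U one has (u_m ⊗ |·|_L)(x ⊗ 1) = u_m(x), where u_m ⊗ |·|_L denotes the projective tensor seminorm on U ⊗_K L (and hence also its extension to the Hausdorff completion U ⊗̂_K L). -/

import Mathlib

open scoped TensorProduct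

noncomputable section

section NormoidDefs

variable (K : Type*) [NormedField K] {M : Type*}

/-- A nonarchimedean seminorm on a `K`-vector space. -/
def IsNASeminorm {U : Type*} [AddCommGroup U] [Module K U] (p : U → ℝ) : Prop :=
  (∀ x, 0 ≤ p x) ∧ (∀ (a : K) (x : U), p (a • x) = ‖a‖ * p x) ∧
    ∀ x y, p (x + y) ≤ max (p x) (p y)

/-- A filter is Cauchy with respect to a family of seminorms. -/
def IsCauchyFam {U : Type*} [AddCommGroup U] (u : M → U → ℝ) (F : Filter U) : Prop :=
  F.NeBot ∧ ∀ m, ∀ ε : ℝ, 0 < ε → ∃ S ∈ F, ∀ x ∈ S, ∀ y ∈ S, u m (x - y) < ε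

/-- A filter converges to a point with respect to a family of seminorms. -/
def TendstoFam {U : Type*} [AddCommGroup U] (u : M → U → ℝ) (F : Filter U) (x₀ : U) : Prop :=
  ∀ m, ∀ ε : ℝ, 0 < ε → ∃ S ∈ F, ∀ x ∈ S, u m (x - x₀) < ε

/-- An `M`-Banachoid space over `K`: a `K`-vector space together with a family of
nonarchimedean seminorms for which it is Hausdorff and complete. -/
def IsBanachoid {U : Type*} [AddCommGroup U] [Module K U] (u : M → U → ℝ) : Prop :=
  (∀ m, IsNASeminorm K (u m)) ∧ (∀ x : U, (∀ m, u m x = 0) → x = 0) ∧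
    ∀ F : Filter U, IsCauchyFam u F → ∃ x₀, TendstoFam u F x₀

/-- The projective tensor seminorm
`(p ⊗ q)(z) = inf { maxᵢ p(xᵢ)·q(yᵢ) | z = ∑ᵢ xᵢ ⊗ yᵢ }`. -/
def projTensorSeminorm {A B : Type*} [AddCommGroup A] [Module K A]
    [AddCommGroup B] [Module K B] (p : A → ℝ) (q : B → ℝ) (z : A ⊗[K] B) : ℝ :=
  sInf {r : ℝ | ∃ ℓ : List (A × B),
    z = (ℓ.map fun ab => ab.1 ⊗ₜ[K] ab.2).sum ∧
    r = (ℓ.map fun ab => p ab.1 * q ab.2).foldr max 0}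

/-- The family of projective tensor seminorms `(u_m ⊗ v_m)_{m ∈ M}`. -/
def projTensorFamily {A B : Type*} [AddCommGroup A] [Module K A]
    [AddCommGroup B] [Module K B] (u : M → A → ℝ) (v : M → B → ℝ) :
    M → A ⊗[K] B → ℝ :=
  fun m => projTensorSeminorm K (u m) (v m)

/-- `(W, w, ι)` is (a realization of) the Hausdorff completion of `(T, t)`: `ι` is `K`-linear,
isometric, has dense image, and `(W, w)` is a Hausdorff complete normoid (Banachoid) space. -/
def IsHausdorffCompletion {T W : Type*} [AddCommGroup T] [Module K T]
    [AddCommGroup W] [Module K W] (t : M → T → ℝ) (w : M → W → ℝ) (ι : T → W) : Prop :=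
  (∀ x y : T, ι (x + y) = ι x + ι y) ∧ (∀ (c : K) (x : T), ι (c • x) = c • ι x) ∧
  (∀ m x, w m (ι x) = t m x) ∧
  (∀ (y : W) (s : Finset M) (ε : ℝ), 0 < ε → ∃ x : T, ∀ m ∈ s, w m (y - ι x) < ε) ∧
  IsBanachoid K w

/-- A bounded map between normoid spaces. -/
def IsBoundedMap {A B : Type*} (u : M → A → ℝ) (v : M → B → ℝ) (f : A → B) : Prop :=
  ∀ m, ∃ C : ℝ, ∀ x, v m (f x) ≤ C * u m x

/-- A strict morphism in `Norm_{M,K}`: a contraction inducing an isometry from the coimage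
to the image. -/
def IsStrictMap {A B : Type*} (u : M → A → ℝ) (v : M → B → ℝ) (f : A → B) : Prop :=
  (∀ m x, v m (f x) ≤ u m x) ∧
  ∀ m (y : B), (∃ x, f x = y) → v m y = sInf {r : ℝ | ∃ x, f x = y ∧ r = u m x}

/-- A strict morphism in `Norm^b_{M,K}`: a bounded map such that, up to constants, the
quotient seminorms of the coimage are bounded by the seminorms of the image. -/
def IsStrictMapB {A B : Type*} (u : M → A → ℝ) (v : M → B → ℝ) (f : A → B) : Prop :=
  IsBoundedMap u v f ∧
  ∀ m, ∃ D : ℝ, ∀ y : B, (∃ x, f x = y) →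
    sInf {r : ℝ | ∃ x, f x = y ∧ r = u m x} ≤ D * v m y

/-- The quotient family of seminorms on `V ⧸ p`. -/
def quotFamily {V : Type*} [AddCommGroup V] [Module K V] (v : M → V → ℝ)
    (p : Submodule K V) : M → (V ⧸ p) → ℝ :=
  fun m q => sInf {r : ℝ | ∃ x : V, Submodule.Quotient.mk x = q ∧ r = v m x}

/-- The restricted family of seminorms on a submodule `p ≤ V`. -/
def restrictFamily {V : Type*} [AddCommGroup V] [Module K V] (v : M → V → ℝ)
    (p : Submodule K V) : M → ↥p → ℝ :=
  fun m x => v m (x : V)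

end NormoidDefs


section AuxFunctionals

variable {K : Type*} [Field K] {E : Type*} [AddCommGroup E] [Module K E]

/-- Coordinate functional along a nonzero vector. -/
lemma exists_coord_functional (v : E) (hv : v ≠ 0) :
    ∃ f : E →ₗ[K] K, ∀ c : K, f (c • v) = c := by
  obtain ⟨g, hg⟩ := (LinearMap.toSpanSingleton K E v).exists_leftInverse_of_injective
    (LinearMap.ker_toSpanSingleton (R := K) (M := E) hv)
  refine ⟨g, fun c => ?_⟩
  have := congrArg (fun h : K →ₗ[K] K => h c) hg
  simpa [LinearMap.toSpanSingleton, LinearMap.smulRight] using this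

/-- A functional vanishing on a subspace `V` and taking value `1` at `a ∉ V`. -/
lemma exists_dual_annihilator {V : Submodule K E} {a : E} (ha : a ∉ V) :
    ∃ h : E →ₗ[K] K, h a = 1 ∧ ∀ v ∈ V, h v = 0 := by
  have hne : (Submodule.Quotient.mk a : E ⧸ V) ≠ 0 := by
    simpa [Submodule.Quotient.mk_eq_zero] using ha
  obtain ⟨f, hf⟩ := exists_coord_functional (K := K) (Submodule.Quotient.mk a : E ⧸ V) hne
  refine ⟨f ∘ₗ V.mkQ, by simpa using hf 1, fun v hv => ?_⟩
  have h0 : (Submodule.Quotient.mk v : E ⧸ V) = 0 := (Submodule.Quotient.mk_eq_zero V).2 hv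
  simp [Submodule.mkQ_apply, h0]

end AuxFunctionals

/-- Near-isometric extension of the coordinate functional over a complete
nontrivially-normed base field, controlled on the span of finitely many vectors. -/
lemma exists_functional_list_nontrivial {K : Type*} [NontriviallyNormedField K] [CompleteSpace K]
    {L : Type*} [NormedAddCommGroup L] [NormedSpace K L] [IsUltrametricDist L]
    (e : L) (he : ‖e‖ = 1) (s : List L) :
    ∀ ε : ℝ, 0 < ε → ∃ f : L →ₗ[K] K, f e = 1 ∧
      ∀ w ∈ Submodule.span K (insert e {x | x ∈ s}), ‖f w‖ ≤ (1 + ε) * ‖w‖ := by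
  induction s with
  | nil =>
    intro ε hε
    have he0 : e ≠ 0 := by intro h; rw [h, norm_zero] at he; norm_num at he
    obtain ⟨f, hf⟩ := exists_coord_functional (K := K) e he0
    refine ⟨f, by simpa using hf 1, fun w hw => ?_⟩
    have hw' : w ∈ Submodule.span K {e} := by simpa using hw
    obtain ⟨c, rfl⟩ := Submodule.mem_span_singleton.1 hw'
    rw [hf c, norm_smul, he, mul_one]
    nlinarith [norm_nonneg c]
  | cons a t ih =>
    intro ε hε
    have hδ : 0 < min (ε/3) 1 := lt_min (by linarith) one_pos
    set δ := min (ε/3) 1 with hδdef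
    have hδ1 : δ ≤ ε/3 := min_le_left _ _
    have hδ2 : δ ≤ 1 := min_le_right _ _
    have hsq : (1+δ) * (1+δ) ≤ 1 + ε := by nlinarith
    obtain ⟨f, hf1, hfb⟩ := ih δ hδ
    set V := Submodule.span K (insert e {x | x ∈ t}) with hV
    have heV : e ∈ V := Submodule.subset_span (Set.mem_insert _ _)
    by_cases haV : a ∈ V
    · refine ⟨f, hf1, fun w hw => ?_⟩
      have hsub : Submodule.span K (insert e {x | x ∈ a :: t}) ≤ V := by
        rw [Submodule.span_le]
        intro y hy
        rcases hy with rfl | hy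
        · exact heV
        · rcases (by simpa using hy : y = a ∨ y ∈ t) with rfl | hy'
          · exact haV
          · exact Submodule.subset_span (Set.mem_insert_of_mem _ hy')
      have h1 := hfb w (hsub hw)
      nlinarith [norm_nonneg w]
    · haveI : FiniteDimensional K V :=
        FiniteDimensional.span_of_finite K (t.finite_toSet.insert e)
      have hclosed : IsClosed (V : Set L) := Submodule.closed_of_finiteDimensional V
      have hVne : (V : Set L).Nonempty := ⟨0, V.zero_mem⟩
      set d := Metric.infDist a (V : Set L) with hd
      have hdpos : 0 < d := (hclosed.notMem_iff_infDist_pos hVne).1 haV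
      have hlt : Metric.infDist a (V : Set L) < (1+δ) * d := by nlinarith
      obtain ⟨v₀, hv₀V, hv₀⟩ := (Metric.infDist_lt_iff hVne).1 hlt
      obtain ⟨h, ha1, hV0⟩ := exists_dual_annihilator haV
      refine ⟨f - (f a - f v₀) • h, ?_, ?_⟩
      · simp [hV0 e heV, hf1]
      · intro w hw
        have hw' : w ∈ V ⊔ K ∙ a := by
          have : Submodule.span K (insert e {x | x ∈ a :: t}) ≤ V ⊔ K ∙ a := by
            rw [Submodule.span_le]
            intro y hy
            rcases hy with rfl | hy
            · exact Submodule.mem_sup_left heV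
            · rcases (by simpa using hy : y = a ∨ y ∈ t) with rfl | hy'
              · exact Submodule.mem_sup_right (Submodule.mem_span_singleton_self _)
              · exact Submodule.mem_sup_left
                  (Submodule.subset_span (Set.mem_insert_of_mem _ hy'))
          exact this hw
        obtain ⟨v, hvV, z, hz, rfl⟩ := Submodule.mem_sup.1 hw'
        obtain ⟨c, rfl⟩ := Submodule.mem_span_singleton.1 hz
        have hval : (f - (f a - f v₀) • h) (v + c • a) = f (v + c • v₀) := by
          have h1 : h v = 0 := hV0 v hvV
          simp only [LinearMap.sub_apply, LinearMap.smul_apply, map_add, map_smul,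
            smul_eq_mul, h1, ha1, mul_one]
          ring
        rw [hval]
        have hmem : v + c • v₀ ∈ V := V.add_mem hvV (V.smul_mem c hv₀V)
        have hb := hfb (v + c • v₀) hmem
        have hcd : ‖c‖ * d ≤ ‖v + c • a‖ := by
          rcases eq_or_ne c 0 with rfl | hc
          · simp [norm_nonneg]
          · have hmem' : -(c⁻¹ • v) ∈ (V : Set L) := V.neg_mem (V.smul_mem c⁻¹ hvV)
            have h1 : d ≤ dist a (-(c⁻¹ • v)) := Metric.infDist_le_dist_of_mem hmem'
            have h2 : dist a (-(c⁻¹ • v)) = ‖c⁻¹ • v + a‖ := by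
              rw [dist_eq_norm, sub_neg_eq_add, add_comm]
            have h3 : ‖v + c • a‖ = ‖c‖ * ‖c⁻¹ • v + a‖ := by
              rw [← norm_smul, smul_add, smul_smul, mul_inv_cancel₀ hc, one_smul]
            rw [h3]
            calc ‖c‖ * d ≤ ‖c‖ * dist a (-(c⁻¹ • v)) :=
                  mul_le_mul_of_nonneg_left h1 (norm_nonneg c)
              _ = ‖c‖ * ‖c⁻¹ • v + a‖ := by rw [h2]
        have hkey : ‖v + c • v₀‖ ≤ (1+δ) * ‖v + c • a‖ := by
          have heq : v + c • v₀ = (v + c • a) - c • (a - v₀) := by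
            rw [smul_sub]; abel
          have hle : ‖v + c • v₀‖ ≤ max ‖v + c • a‖ (‖c • (a - v₀)‖) := by
            rw [heq, sub_eq_add_neg]
            refine (IsUltrametricDist.norm_add_le_max _ _).trans ?_
            rw [norm_neg]
          have h5 : ‖c • (a - v₀)‖ ≤ (1+δ) * (‖c‖ * d) := by
            rw [norm_smul]
            have : ‖a - v₀‖ ≤ (1+δ) * d := by
              rw [← dist_eq_norm]; linarith
            nlinarith [norm_nonneg c]
          refine hle.trans (max_le ?_ ?_)
          · nlinarith [norm_nonneg (v + c • a)]
          · calc ‖c • (a - v₀)‖ ≤ (1+δ) * (‖c‖ * d) := h5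
              _ ≤ (1+δ) * ‖v + c • a‖ := by nlinarith
        calc ‖f (v + c • v₀)‖ ≤ (1+δ) * ‖v + c • v₀‖ := hb
          _ ≤ (1+δ) * ((1+δ) * ‖v + c • a‖) := by nlinarith [norm_nonneg (v + c • v₀)]
          _ ≤ (1+ε) * ‖v + c • a‖ := by nlinarith [norm_nonneg (v + c • a)]

/-- The trivially-normed case. -/
lemma exists_functional_list_trivial {K : Type*} [NormedField K]
    {L : Type*} [NormedField L] [IsUltrametricDist L] [Algebra K L]
    (hKL : ∀ c : K, ‖algebraMap K L c‖ = ‖c‖)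
    (htriv : ∀ c : K, ‖c‖ ≤ 1) (s : List L) :
    ∃ f : L →ₗ[K] K, f 1 = 1 ∧ ∀ a ∈ s, ‖f a‖ ≤ ‖a‖ := by
  set W := Submodule.span K {x : L | x ∈ s ∧ ‖x‖ < 1} with hWdef
  have hW : ∀ w ∈ W, ‖w‖ < 1 := by
    intro w hw
    induction hw using Submodule.span_induction with
    | mem x hx => exact hx.2
    | zero => simp
    | add x y _ _ hx hy =>
      exact lt_of_le_of_lt (IsUltrametricDist.norm_add_le_max x y) (max_lt hx hy)
    | smul c x _ hx =>
      have : ‖c • x‖ = ‖c‖ * ‖x‖ := by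
        rw [Algebra.smul_def, norm_mul, hKL]
      rw [this]
      calc ‖c‖ * ‖x‖ ≤ 1 * ‖x‖ := mul_le_mul_of_nonneg_right (htriv c) (norm_nonneg x)
        _ = ‖x‖ := one_mul _
        _ < 1 := hx
  have h1W : (1 : L) ∉ W := by
    intro h
    have := hW _ h
    rw [norm_one] at this
    exact lt_irrefl _ this
  obtain ⟨h, h1, h0⟩ := exists_dual_annihilator h1W
  refine ⟨h, h1, fun a ha => ?_⟩
  by_cases hna : ‖a‖ < 1
  · rw [h0 a (Submodule.subset_span ⟨ha, hna⟩), norm_zero]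
    exact norm_nonneg a
  · exact le_trans (htriv _) (not_lt.1 hna)

/-- Combined: a near-contractive functional with `f 1 = 1`. -/
lemma exists_functional {K : Type*} [NormedField K] [CompleteSpace K]
    {L : Type*} [NormedField L] [IsUltrametricDist L] [Algebra K L]
    (hKL : ∀ c : K, ‖algebraMap K L c‖ = ‖c‖) (s : List L) (ε : ℝ) (hε : 0 < ε) :
    ∃ f : L →ₗ[K] K, f 1 = 1 ∧ ∀ a ∈ s, ‖f a‖ ≤ (1 + ε) * ‖a‖ := by
  by_cases hnt : ∃ c : K, 1 < ‖c‖
  · letI : NontriviallyNormedField K := { ‹NormedField K› with non_trivial := hnt }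
    letI : NormedSpace K L := ⟨fun c x => by rw [Algebra.smul_def, norm_mul, hKL]⟩
    obtain ⟨f, hf1, hfb⟩ := exists_functional_list_nontrivial (K := K) (L := L)
      1 norm_one s ε hε
    exact ⟨f, hf1, fun a ha =>
      hfb a (Submodule.subset_span (Set.mem_insert_of_mem _ ha))⟩
  · push_neg at hnt
    obtain ⟨f, hf1, hfb⟩ := exists_functional_list_trivial hKL hnt s
    refine ⟨f, hf1, fun a ha => le_trans (hfb a ha) ?_⟩
    nlinarith [norm_nonneg a]

lemma foldr_max_nonneg (l : List ℝ) : 0 ≤ l.foldr max 0 := by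
  induction l with
  | nil => simp
  | cons a t ih => exact le_max_of_le_right ih

lemma foldr_max_map_le {α : Type*} (l : List α) (g g' : α → ℝ)
    (h : ∀ a ∈ l, g a ≤ g' a) :
    (l.map g).foldr max 0 ≤ (l.map g').foldr max 0 := by
  induction l with
  | nil => simp
  | cons a t ih =>
    simp only [List.map_cons, List.foldr_cons]
    exact max_le_max (h a (List.mem_cons_self (a := a) (l := t))) (ih fun b hb => h b (List.mem_cons_of_mem _ hb))

lemma foldr_max_map_const_mul {α : Type*} (l : List α) (g : α → ℝ) (c : ℝ) (hc : 0 ≤ c) :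
    (l.map fun a => c * g a).foldr max 0 = c * (l.map g).foldr max 0 := by
  induction l with
  | nil => simp
  | cons a t ih =>
    simp only [List.map_cons, List.foldr_cons, ih]
    rw [mul_max_of_nonneg _ _ hc]

lemma seminorm_list_sum_le {K : Type*} [NormedField K] {U : Type*} [AddCommGroup U]
    [Module K U] {u : U → ℝ} (hu : IsNASeminorm K u) (l : List U) :
    u l.sum ≤ (l.map u).foldr max 0 := by
  induction l with
  | nil =>
    have : u 0 = 0 := by simpa using hu.2.1 0 0
    simp [this]
  | cons a t ih =>
    simp only [List.sum_cons, List.map_cons, List.foldr_cons]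
    exact (hu.2.2 a t.sum).trans (max_le_max le_rfl ih)

/-- **The canonical map to a complete scalar extension is an isometry**
(Proposition `prop:hoKL`, tensor-seminorm form).
Let `K` be a complete nonarchimedean valued field and `L` a complete nonarchimedean valued
extension of `K`.  For every `M`-Banachoid space `(U, (u_m))` over `K`, the natural map
`x ↦ 1 ⊗ x` from `U` to `L ⊗_K U` is an isometry for the projective tensor seminorms
`u_m ⊗ |·|_L` (and hence also for their extensions to the Hausdorff completion
`U ⊗̂_K L`). -/
theorem tensor_with_complete_extension_isometry
    {K : Type*} [NormedField K] [IsUltrametricDist K] [CompleteSpace K]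
    {L : Type*} [NormedField L] [IsUltrametricDist L] [CompleteSpace L]
    [Algebra K L] (hKL : ∀ c : K, ‖algebraMap K L c‖ = ‖c‖)
    {M : Type*} [Nonempty M]
    {U : Type*} [AddCommGroup U] [Module K U]
    (u : M → U → ℝ) (hU : IsBanachoid K u) :
    ∀ (m : M) (x : U),
      projTensorSeminorm K (fun a : L => ‖a‖) (u m) ((1 : L) ⊗ₜ[K] x) = u m x := by
  intro m x
  have hu := hU.1 m
  have hmem : u m x ∈ {r : ℝ | ∃ ℓ : List (L × U),
      (1 : L) ⊗ₜ[K] x = (ℓ.map fun ab => ab.1 ⊗ₜ[K] ab.2).sum ∧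
      r = (ℓ.map fun ab => ‖ab.1‖ * u m ab.2).foldr max 0} := by
    refine ⟨[((1 : L), x)], by simp, ?_⟩
    simp [max_eq_left (hu.1 x)]
  have hbdd : BddBelow {r : ℝ | ∃ ℓ : List (L × U),
      (1 : L) ⊗ₜ[K] x = (ℓ.map fun ab => ab.1 ⊗ₜ[K] ab.2).sum ∧
      r = (ℓ.map fun ab => ‖ab.1‖ * u m ab.2).foldr max 0} := by
    refine ⟨0, fun r hr => ?_⟩
    obtain ⟨ℓ, -, rfl⟩ := hr
    exact foldr_max_nonneg _
  refine le_antisymm (csInf_le hbdd hmem) (le_csInf ⟨_, hmem⟩ ?_)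
  rintro r ⟨ℓ, hsum, rfl⟩
  set r := (ℓ.map fun ab => ‖ab.1‖ * u m ab.2).foldr max 0 with hrdef
  have hr0 : 0 ≤ r := foldr_max_nonneg _
  have hmain : ∀ ε : ℝ, 0 < ε → u m x ≤ (1 + ε) * r := by
    intro ε hε
    obtain ⟨f, hf1, hfb⟩ := exists_functional hKL (ℓ.map Prod.fst) ε hε
    set T : L ⊗[K] U →ₗ[K] U := TensorProduct.lift ((LinearMap.lsmul K U).comp f) with hT
    have hTtmul : ∀ (a : L) (y : U), T (a ⊗ₜ[K] y) = f a • y := by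
      intro a y
      simp [hT, TensorProduct.lift.tmul]
    have hx : x = (ℓ.map fun ab => f ab.1 • ab.2).sum := by
      have h1 := congrArg T hsum
      rw [map_list_sum, List.map_map] at h1
      rw [hTtmul, hf1, one_smul] at h1
      rw [h1]
      exact congrArg List.sum (List.map_congr_left (fun ab _ => hTtmul ab.1 ab.2))
    calc u m x = u m (ℓ.map fun ab => f ab.1 • ab.2).sum := by rw [← hx]
      _ ≤ ((ℓ.map fun ab => f ab.1 • ab.2).map (u m)).foldr max 0 :=
          seminorm_list_sum_le hu _
      _ = (ℓ.map fun ab => ‖f ab.1‖ * u m ab.2).foldr max 0 := by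
          rw [List.map_map]
          congr 1
          exact List.map_congr_left (fun ab _ => hu.2.1 (f ab.1) ab.2)
      _ ≤ (ℓ.map fun ab => (1 + ε) * (‖ab.1‖ * u m ab.2)).foldr max 0 := by
          apply foldr_max_map_le
          intro ab hab
          have h3 := hfb ab.1 (List.mem_map_of_mem (f := Prod.fst) hab)
          have h4 := hu.1 ab.2
          nlinarith
      _ = (1 + ε) * r := foldr_max_map_const_mul ℓ _ _ (by linarith)
  rcases eq_or_lt_of_le hr0 with hr | hrpos
  · have := hmain 1 one_pos
    rw [← hr] at this
    simpa [← hr] using this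
  · by_contra hlt
    push_neg at hlt
    have h5 := hmain ((u m x - r) / (2 * r)) (div_pos (by linarith) (by linarith))
    have : (1 + (u m x - r) / (2 * r)) * r = r + (u m x - r) / 2 := by
      field_simp
    rw [this] at h5
    linarith
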